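/- Let A be a commutative, Noetherian, reduced ring of Krull dimension one whose normalization Ã is finite as an A-module. Then the conductor ideal 𝔣 := {a ∈ A : a·x lies in the image of A for every x ∈ Ã} contains a non-zero-divisor of A, and the quotient ring A/𝔣 is Artinian. -/

import Mathlib

set_option synthInstance.maxHeartbeats 1000000
set_option maxHeartbeats 1000000

/-- A non-zero-divisor does not lie in any minimal prime of a commutative ring. -/
lemma aux_not_mem_minimalPrimes_of_nzd {A : Type*} [CommRing A] {p : Ideal A}
    (hp : p ∈ minimalPrimes A) {b : A} (hb : b ∈ nonZeroDivisors A) : b ∉ p := by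
  intro hbp
  haveI : p.IsPrime := hp.1.1
  have hnil : IsNilpotent (algebraMap A (Localization p.primeCompl) b) := by
    exact absurd hb (Set.disjoint_left.mp (Ideal.disjoint_nonZeroDivisors_of_mem_minimalPrimes hp) hbp)
  obtain ⟨n, hn⟩ := hnil
  rw [← map_pow] at hn
  obtain ⟨⟨s, hs⟩, hmul⟩ := (IsLocalization.map_eq_zero_iff p.primeCompl _ _).mp hn
  have hs0 : s = 0 := (pow_mem hb n).2 s hmul
  exact hs (hs0 ▸ p.zero_mem)

/-- Transfer Artinian-ness along a surjective ring hom acting compatibly. -/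
lemma aux_isArtinian_of_surjective_smul {R S M : Type*} [CommRing R] [CommRing S]
    [AddCommGroup M] [Module R M] [Module S M] (f : R →+* S)
    (hf : Function.Surjective f) (hcomp : ∀ (r : R) (x : M), f r • x = r • x)
    (hart : IsArtinian S M) : IsArtinian R M := by
  let g : Submodule R M → Submodule S M := fun N =>
    { carrier := N
      add_mem' := fun h1 h2 => N.add_mem h1 h2
      zero_mem' := N.zero_mem
      smul_mem' := by
        intro s x hx
        obtain ⟨r, rfl⟩ := hf s
        rw [hcomp]
        exact N.smul_mem r hx }
  have hg : StrictMono g := by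
    intro N1 N2 h
    rw [SetLike.lt_iff_le_and_exists] at h ⊢
    exact ⟨fun x hx => h.1 hx, h.2⟩
  exact hg.wellFoundedLT

lemma aux_quot_primes_maximal {R : Type*} [CommRing R] (I : Ideal R)
    (h : ∀ P : Ideal R, P.IsPrime → P.IsMaximal)
    (Q : Ideal (R ⧸ I)) (hQ : Q.IsPrime) : Q.IsMaximal := by
  haveI hc : (Q.comap (Ideal.Quotient.mk I)).IsPrime := hQ.comap _
  have hm := h _ hc
  have heq : (Q.comap (Ideal.Quotient.mk I)).map (Ideal.Quotient.mk I) = Q :=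
    Ideal.map_comap_of_surjective _ Ideal.Quotient.mk_surjective Q
  rcases Ideal.map_eq_top_or_isMaximal_of_surjective (Ideal.Quotient.mk I) Ideal.Quotient.mk_surjective hm with
    h1 | h2
  · exact absurd (heq ▸ h1) hQ.ne_top
  · exact heq ▸ h2

lemma aux_isArtinianRing_of_reduced (R : Type*) [CommRing R] [IsNoetherianRing R]
    [IsReduced R] (h : ∀ P : Ideal R, P.IsPrime → P.IsMaximal) : IsArtinianRing R := by
  have hfin : (minimalPrimes R).Finite := minimalPrimes.finite_of_isNoetherianRing R
  haveI := hfin.fintype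
  let φ : R →ₗ[R] ((p : minimalPrimes R) → R ⧸ (p : Ideal R)) :=
    LinearMap.pi fun p => (p : Ideal R).mkQ
  have hker : LinearMap.ker φ = ⊥ := by
    rw [LinearMap.ker_pi]
    simp only [Submodule.ker_mkQ]
    have h1 : sInf (minimalPrimes R) = ⊥ := by
      have h2 := Ideal.sInf_minimalPrimes (I := (⊥ : Ideal R))
      rw [show ((⊥ : Ideal R)).radical = nilradical R from rfl, nilradical_eq_zero,
        Ideal.zero_eq_bot] at h2
      exact h2
    rw [sInf_eq_iInf'] at h1
    exact h1
  haveI : ∀ p : minimalPrimes R, IsArtinian R (R ⧸ (p : Ideal R)) := by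
    intro p
    haveI hp : (p : Ideal R).IsPrime := p.2.1.1
    haveI := h _ hp
    letI : Field (R ⧸ (p : Ideal R)) := Ideal.Quotient.field _
    haveI hA : IsArtinianRing (R ⧸ (p : Ideal R)) := inferInstance
    refine aux_isArtinian_of_surjective_smul (Ideal.Quotient.mk (p : Ideal R))
      Ideal.Quotient.mk_surjective (fun r x => ?_) hA
    obtain ⟨y, rfl⟩ := Ideal.Quotient.mk_surjective x
    rw [smul_eq_mul, ← map_mul]
    rfl
  exact isArtinian_of_injective φ (LinearMap.ker_eq_bot.mp hker)

lemma aux_isArtinianRing_of_primes_maximal (R : Type*) [CommRing R] [IsNoetherianRing R]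
    (h : ∀ P : Ideal R, P.IsPrime → P.IsMaximal) : IsArtinianRing R := by
  obtain ⟨k, hk⟩ := IsNoetherianRing.isNilpotent_nilradical R
  set N := nilradical R with hN
  haveI : IsReduced (R ⧸ N) := by
    rw [← Ideal.isRadical_iff_quotient_reduced]
    exact Ideal.radical_isRadical (⊥ : Ideal R)
  haveI hRN : IsArtinianRing (R ⧸ N) :=
    aux_isArtinianRing_of_reduced _ (aux_quot_primes_maximal N h)
  have key : ∀ i : ℕ, IsArtinian R (R ⧸ (N ^ i : Ideal R)) := by
    intro i
    induction i with
    | zero =>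
        rw [pow_zero, Ideal.one_eq_top]
        haveI : Subsingleton (R ⧸ (⊤ : Ideal R)) :=
          Submodule.Quotient.subsingleton_iff.mpr rfl
        infer_instance
    | succ i ih =>
        have hle : (N ^ (i + 1) : Ideal R) ≤ N ^ i := Ideal.pow_le_pow_right (by omega)
        set S : Submodule R (R ⧸ (N ^ (i + 1) : Ideal R)) :=
          Submodule.map (N ^ (i + 1) : Ideal R).mkQ (N ^ i : Ideal R) with hS
        have e := Submodule.quotientQuotientEquivQuotient
          (N ^ (i + 1) : Ideal R) (N ^ i : Ideal R) hle
        have hquot : IsArtinian R ((R ⧸ (N ^ (i + 1) : Ideal R)) ⧸ S) := by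
          haveI := ih
          exact isArtinian_of_linearEquiv e.symm
        have htor : Module.IsTorsionBySet R S (N : Set R) := by
          rintro ⟨x, hx⟩ ⟨n, hn⟩
          obtain ⟨z, hz, rfl⟩ := hx
          have hmem : n * z ∈ (N ^ (i + 1) : Ideal R) := by
            rw [pow_succ']
            exact Ideal.mul_mem_mul hn hz
          ext
          show n • (N ^ (i + 1) : Ideal R).mkQ z = 0
          rw [← map_smul, smul_eq_mul]
          exact (Submodule.Quotient.mk_eq_zero _).mpr hmem
        letI mS : Module (R ⧸ N) S := htor.module
        haveI : IsNoetherian R (R ⧸ (N ^ (i + 1) : Ideal R)) := inferInstance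
        haveI : Module.Finite R S := inferInstance
        haveI : Module.Finite (R ⧸ N) S := Module.Finite.of_restrictScalars_finite R (R ⧸ N) S
        haveI hSart : IsArtinian (R ⧸ N) S := inferInstance
        have hSR : IsArtinian R S :=
          aux_isArtinian_of_surjective_smul (Ideal.Quotient.mk N)
            Ideal.Quotient.mk_surjective (fun r x => htor.mk_smul r x) hSart
        exact (isArtinian_iff_submodule_quotient S).mpr ⟨hSR, hquot⟩
  have := key k
  rw [hk] at this
  exact isArtinian_of_linearEquiv (Submodule.quotEquivOfEqBot _ rfl)

/-- The conductor ideal of a commutative reduced ring `A` in its normalization (the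
integral closure of `A` in its total ring of fractions): it consists of the `a ∈ A` such
that multiplication by `a` carries the whole normalization into the image of `A`. -/
def normalizationConductor (A : Type*) [CommRing A] : Ideal A where
  carrier := {a : A | ∀ x : integralClosure A (FractionRing A),
    a • (x : FractionRing A) ∈ Set.range (algebraMap A (FractionRing A))}
  zero_mem' := fun x => ⟨0, by simp⟩
  add_mem' := by
    rintro a b ha hb x
    obtain ⟨u, hu⟩ := ha x
    obtain ⟨v, hv⟩ := hb x
    exact ⟨u + v, by rw [map_add, hu, hv, add_smul]⟩
  smul_mem' := by
    rintro c a ha x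
    obtain ⟨u, hu⟩ := ha x
    refine ⟨c * u, ?_⟩
    rw [smul_eq_mul, mul_smul, ← hu, map_mul, ← Algebra.smul_def]

/-- Let `A` be a commutative, Noetherian, reduced ring of Krull
dimension one whose normalization is finite as an `A`-module.  Then the conductor ideal
contains a non-zero-divisor of `A` and the quotient `A/𝔣` is Artinian. -/
theorem conductor_contains_nonZeroDivisor_and_quotient_isArtinian
    (A : Type*) [CommRing A] [IsNoetherianRing A] [IsReduced A]
    (hdim : ringKrullDim A = 1)
    [Module.Finite A (integralClosure A (FractionRing A))] :
    (∃ a ∈ normalizationConductor A, a ∈ nonZeroDivisors A) ∧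
    IsArtinianRing (A ⧸ normalizationConductor A) := by
  classical
  set K := FractionRing A
  set C := integralClosure A K
  obtain ⟨s, hs⟩ := Module.Finite.fg_top (R := A) (M := C)
  obtain ⟨b, hb⟩ := IsLocalization.exist_integer_multiples (nonZeroDivisors A) s
    (fun t : C => (t : K))
  have hbmem : (b : A) ∈ normalizationConductor A := by
    intro x
    let Rng : Submodule A K := LinearMap.range (Algebra.linearMap A K)
    let ψ : C →ₗ[A] K := (b : A) • (C.val.toLinearMap)
    have hle : Submodule.span A (s : Set C) ≤ Submodule.comap ψ Rng := by
      rw [Submodule.span_le]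
      intro t ht
      obtain ⟨c, hc⟩ := hb t (Finset.mem_coe.mp ht)
      exact ⟨c, hc⟩
    have hx : x ∈ Submodule.comap ψ Rng := hle (hs ▸ Submodule.mem_top)
    obtain ⟨y, hy⟩ := hx
    exact ⟨y, hy⟩
  refine ⟨⟨b, hbmem, b.2⟩, ?_⟩
  apply aux_isArtinianRing_of_primes_maximal
  intro P hP
  set p := P.comap (Ideal.Quotient.mk (normalizationConductor A)) with hpdef
  haveI hp1 : p.IsPrime := hP.comap _
  have hbp : (b : A) ∈ p := by
    show Ideal.Quotient.mk _ (b : A) ∈ P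
    rw [Ideal.Quotient.eq_zero_iff_mem.mpr hbmem]
    exact P.zero_mem
  have hpmax : p.IsMaximal := by
    by_contra hnot
    obtain ⟨q, hq, hqle⟩ := Ideal.exists_minimalPrimes_le (I := (⊥ : Ideal A)) (J := p) bot_le
    have hq' : q ∈ minimalPrimes A := hq
    have hbq : (b : A) ∉ q := aux_not_mem_minimalPrimes_of_nzd hq' b.2
    have h1 : q < p := lt_of_le_of_ne hqle (fun h => hbq (h ▸ hbp))
    obtain ⟨m, hm, hpm⟩ := Ideal.exists_le_maximal p hp1.ne_top
    have h2 : p < m := lt_of_le_of_ne hpm (fun h => hnot (h ▸ hm))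
    haveI := hq'.1.1
    haveI := hm.isPrime
    let c : LTSeries (PrimeSpectrum A) :=
      ⟨2, ![⟨q, hq'.1.1⟩, ⟨p, hp1⟩, ⟨m, hm.isPrime⟩], by
        intro i
        fin_cases i
        · exact (PrimeSpectrum.asIdeal_lt_asIdeal _ _).mp h1
        · exact (PrimeSpectrum.asIdeal_lt_asIdeal _ _).mp h2⟩
    have h3 := Order.LTSeries.length_le_krullDim c
    rw [show Order.krullDim (PrimeSpectrum A) = ringKrullDim A from rfl, hdim] at h3
    norm_num [c] at h3
  have heq : Ideal.map (Ideal.Quotient.mk (normalizationConductor A)) p = P :=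
    Ideal.map_comap_of_surjective _ Ideal.Quotient.mk_surjective P
  rcases Ideal.map_eq_top_or_isMaximal_of_surjective
    (Ideal.Quotient.mk (normalizationConductor A)) Ideal.Quotient.mk_surjective hpmax with h1 | h2
  · exact absurd (heq ▸ h1) hP.ne_top
  · exact heq ▸ h2
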